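/- In QLP extended with a fixed point constant δ and the axiom δ ↔ [(∃x)x:¬δ ∨ (E ∧ ¬(∃x)x:(δ → E))] for a propositional letter E (and F = ∅), the system is inconsistent. -/

import Mathlib

/-- Justification terms of Fitting's quantified logic of proofs QLP:
variables, primitive terms `f(x₁,…,xₙ)` (a function symbol applied to
justification variables), application `·`, sum `+`, proof checker `!`, and
the uniform verifier `(t ∀ x)` (which binds `x`). -/
inductive Tm : Type
  | var : ℕ → Tm
  | prim : ℕ → List ℕ → Tm
  | app : Tm → Tm → Tm
  | sum : Tm → Tm → Tm
  | bang : Tm → Tm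
  | uall : Tm → ℕ → Tm

/-- Free justification variables of a term. -/
def Tm.fv : Tm → Finset ℕ
  | .var x => {x}
  | .prim _ xs => xs.toFinset
  | .app s t => s.fv ∪ t.fv
  | .sum s t => s.fv ∪ t.fv
  | .bang t => t.fv
  | .uall t x => t.fv.erase x

/-- Substitution of a term for a justification variable in a term. -/
def Tm.substT (s : Tm) (x : ℕ) : Tm → Tm
  | .var y => if y = x then s else .var y
  | .prim f xs => .prim f xs
  | .app a b => .app (Tm.substT s x a) (Tm.substT s x b)
  | .sum a b => .sum (Tm.substT s x a) (Tm.substT s x b)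
  | .bang a => .bang (Tm.substT s x a)
  | .uall a y => if y = x then .uall a y else .uall (Tm.substT s x a) y

/-- `FreeForT s x t`: the term `s` is substitutable ("free for") the variable
`x` in the term `t` (no variable of `s` gets captured, and `x` does not occur
inside a primitive term). -/
def FreeForT (s : Tm) (x : ℕ) : Tm → Prop
  | .var _ => True
  | .prim _ xs => x ∉ xs
  | .app a b => FreeForT s x a ∧ FreeForT s x b
  | .sum a b => FreeForT s x a ∧ FreeForT s x b
  | .bang a => FreeForT s x a
  | .uall a y => x ∈ Tm.fv (.uall a y) → (y ∉ s.fv ∧ FreeForT s x a)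

/-- Formulas of QLP, with quantifiers over justification variables. -/
inductive Fm : Type
  | atom : ℕ → Fm
  | delta : Fm
  | bot : Fm
  | imp : Fm → Fm → Fm
  | just : Tm → Fm → Fm
  | all : ℕ → Fm → Fm
  | ex : ℕ → Fm → Fm

namespace Fm

def neg (A : Fm) : Fm := imp A bot
def disj (A B : Fm) : Fm := imp (neg A) B
def conj (A B : Fm) : Fm := neg (imp A (neg B))
def iff' (A B : Fm) : Fm := conj (imp A B) (imp B A)
/-- Exclusive disjunction. -/
def xor' (A B : Fm) : Fm := conj (disj A B) (neg (conj A B))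

/-- Free justification variables of a formula. -/
def fv : Fm → Finset ℕ
  | atom _ => ∅
  | delta => ∅
  | bot => ∅
  | imp A B => A.fv ∪ B.fv
  | just t A => t.fv ∪ A.fv
  | all x A => A.fv.erase x
  | ex x A => A.fv.erase x

/-- Substitution of a term for a justification variable in a formula. -/
def subst (s : Tm) (x : ℕ) : Fm → Fm
  | atom p => atom p
  | delta => delta
  | bot => bot
  | imp A B => imp (A.subst s x) (B.subst s x)
  | just t A => just (Tm.substT s x t) (A.subst s x)
  | all y A => if y = x then all y A else all y (A.subst s x)
  | ex y A => if y = x then ex y A else ex y (A.subst s x)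

end Fm

/-- `FreeFor s x A`: the term `s` is substitutable for the variable `x` in the
formula `A`. -/
def FreeFor (s : Tm) (x : ℕ) : Fm → Prop
  | .atom _ => True
  | .delta => True
  | .bot => True
  | .imp A B => FreeFor s x A ∧ FreeFor s x B
  | .just t A => FreeForT s x t ∧ FreeFor s x A
  | .all y A => x ∈ Fm.fv (.all y A) → (y ∉ s.fv ∧ FreeFor s x A)
  | .ex y A => x ∈ Fm.fv (.ex y A) → (y ∉ s.fv ∧ FreeFor s x A)

open Fm

/-- Provability in Fitting's quantified logic of proofs QLP, extended by the
fixed point axiom `fpAx` and with axiom necessitation restricted to the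
primitive term specification `F`. Axioms: propositional tautologies (via a
Hilbert basis), quantifier axioms Q1–Q4, jK, jT, j4, Sum, and the uniformity
formula UF; rules: modus ponens MP, generalization Gen, axiom necessitation AN,
and quantified necessitation qNec. -/
inductive Prov (F : Fm → Prop) (fpAx : Fm) : Fm → Prop
  | ax1 (A B : Fm) : Prov F fpAx (imp A (imp B A))
  | ax2 (A B C : Fm) : Prov F fpAx (imp (imp A (imp B C)) (imp (imp A B) (imp A C)))
  | ax3 (A B : Fm) : Prov F fpAx (imp (imp (neg A) (neg B)) (imp B A))
  | q1 {t : Tm} {x : ℕ} {A : Fm} (h : FreeFor t x A) :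
      Prov F fpAx (imp (all x A) (A.subst t x))
  | q2 {x : ℕ} {A B : Fm} (h : x ∉ A.fv) :
      Prov F fpAx (imp (all x (imp A B)) (imp A (all x B)))
  | q3 {t : Tm} {x : ℕ} {A : Fm} (h : FreeFor t x A) :
      Prov F fpAx (imp (A.subst t x) (ex x A))
  | q4 {x : ℕ} {A B : Fm} (h : x ∉ B.fv) :
      Prov F fpAx (imp (all x (imp A B)) (imp (ex x A) B))
  | jk (s t : Tm) (A B : Fm) :
      Prov F fpAx (imp (just s (imp A B)) (imp (just t A) (just (.app s t) B)))
  | jt (t : Tm) (A : Fm) : Prov F fpAx (imp (just t A) A)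
  | j4 (t : Tm) (A : Fm) :
      Prov F fpAx (imp (just t A) (just (.bang t) (just t A)))
  | sum1 (s t : Tm) (A : Fm) : Prov F fpAx (imp (just s A) (just (.sum s t) A))
  | sum2 (s t : Tm) (A : Fm) : Prov F fpAx (imp (just s A) (just (.sum t s) A))
  | uf {y : ℕ} {t : Tm} {x : ℕ} {A : Fm} (hy1 : y ∉ t.fv) (hy2 : y ∉ A.fv) :
      Prov F fpAx (imp (ex y (just (.var y) (all x (just t A))))
        (just (.uall t x) (all x A)))
  | an {A : Fm} : F A → Prov F fpAx A
  | fp : Prov F fpAx fpAx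
  | mp {A B : Fm} : Prov F fpAx (imp A B) → Prov F fpAx A → Prov F fpAx B
  | gen {A : Fm} (x : ℕ) : Prov F fpAx A → Prov F fpAx (all x A)
  | qnec {x : ℕ} {A : Fm} (h : x ∉ A.fv) :
      Prov F fpAx A → Prov F fpAx (ex x (just (.var x) A))

section Aux

variable (F : Fm → Prop) (fp : Fm)

/-- Derivability from a list of hypotheses (MP only). -/
inductive PH : List Fm → Fm → Prop
  | hyp {Γ A} : A ∈ Γ → PH Γ A
  | thm {Γ A} : Prov F fp A → PH Γ A
  | mp {Γ A B} : PH Γ (imp A B) → PH Γ A → PH Γ B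

variable {F fp}

theorem PH.weaken {Γ Γ' : List Fm} {A} (h : PH F fp Γ A) (hs : ∀ x ∈ Γ, x ∈ Γ') :
    PH F fp Γ' A := by
  induction h generalizing Γ' with
  | hyp h => exact PH.hyp (hs _ h)
  | thm h => exact PH.thm h
  | mp _ _ ih1 ih2 => exact PH.mp (ih1 hs) (ih2 hs)

theorem prov_id (A : Fm) : Prov F fp (imp A A) :=
  Prov.mp (Prov.mp (Prov.ax2 A (imp A A) A) (Prov.ax1 A (imp A A))) (Prov.ax1 A A)

theorem PH.ded {Γ : List Fm} {B A} (h : PH F fp (B :: Γ) A) : PH F fp Γ (imp B A) := by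
  generalize hΔ : B :: Γ = Δ at h
  induction h with
  | hyp h =>
    subst hΔ
    rcases List.mem_cons.1 h with rfl | h
    · exact PH.thm (prov_id _)
    · exact PH.mp (PH.thm (Prov.ax1 _ B)) (PH.hyp h)
  | thm h => exact PH.mp (PH.thm (Prov.ax1 _ B)) (PH.thm h)
  | mp _ _ ih1 ih2 => exact PH.mp (PH.mp (PH.thm (Prov.ax2 B _ _)) ih1) ih2

theorem PH.toProv {A} (h : PH F fp [] A) : Prov F fp A := by
  generalize hΓ : ([] : List Fm) = Γ at h
  induction h with
  | hyp h => subst hΓ; simp at h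
  | thm h => exact h
  | mp _ _ ih1 ih2 => exact Prov.mp ih1 ih2

theorem PH.hyp0 {Γ : List Fm} (A : Fm) : PH F fp (A :: Γ) A :=
  PH.hyp (List.mem_cons_self)

theorem PH.hyp1 {Γ : List Fm} (A B : Fm) : PH F fp (B :: A :: Γ) A :=
  PH.hyp (List.mem_cons_of_mem _ (List.mem_cons_self))

theorem prov_nn_intro (A : Fm) : Prov F fp (imp A (neg (neg A))) :=
  PH.toProv (PH.ded (PH.ded (PH.mp (PH.hyp0 (neg A)) (PH.hyp1 A (neg A)))))

theorem prov_dne (A : Fm) : Prov F fp (imp (neg (neg A)) A) :=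
  Prov.mp (Prov.ax3 A (neg (neg A))) (prov_nn_intro (neg A))

theorem prov_efq (A : Fm) : Prov F fp (imp bot A) :=
  PH.toProv (PH.ded (PH.mp (PH.thm (prov_dne A))
    (PH.mp (PH.thm (Prov.ax1 bot (neg A))) (PH.hyp0 bot))))

theorem PH.byContra {Γ : List Fm} {A} (h : PH F fp (neg A :: Γ) bot) : PH F fp Γ A :=
  PH.mp (PH.thm (prov_dne A)) (PH.ded h)

theorem PH.caseSplit {Γ : List Fm} {A B C} (h : PH F fp Γ (disj A B))
    (ha : PH F fp Γ (imp A C)) (hb : PH F fp Γ (imp B C)) : PH F fp Γ C := by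
  apply PH.byContra
  have hsub : ∀ x ∈ Γ, x ∈ neg C :: Γ := fun x hx => List.mem_cons_of_mem _ hx
  have hnA : PH F fp (neg C :: Γ) (neg A) := by
    apply PH.ded
    have hsub2 : ∀ x ∈ Γ, x ∈ A :: neg C :: Γ :=
      fun x hx => List.mem_cons_of_mem _ (List.mem_cons_of_mem _ hx)
    have hC : PH F fp (A :: neg C :: Γ) C := PH.mp (ha.weaken hsub2) (PH.hyp0 A)
    exact PH.mp (PH.hyp1 (neg C) A) hC
  have hB : PH F fp (neg C :: Γ) B := PH.mp (h.weaken hsub) hnA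
  have hC : PH F fp (neg C :: Γ) C := PH.mp (hb.weaken hsub) hB
  exact PH.mp (PH.hyp0 (neg C)) hC

theorem prov_conj_elim1 (A B : Fm) : Prov F fp (imp (conj A B) A) := by
  apply PH.toProv; apply PH.ded; apply PH.byContra
  have hAnB : PH F fp (neg A :: [conj A B]) (imp A (neg B)) := by
    apply PH.ded
    have hbot : PH F fp (A :: neg A :: [conj A B]) bot :=
      PH.mp (PH.hyp1 (neg A) A) (PH.hyp0 A)
    exact PH.mp (PH.thm (prov_efq (neg B))) hbot
  exact PH.mp (PH.hyp1 (conj A B) (neg A)) hAnB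

theorem prov_conj_elim2 (A B : Fm) : Prov F fp (imp (conj A B) B) := by
  apply PH.toProv; apply PH.ded; apply PH.byContra
  have hAnB : PH F fp (neg B :: [conj A B]) (imp A (neg B)) :=
    PH.mp (PH.thm (Prov.ax1 (neg B) A)) (PH.hyp0 (neg B))
  exact PH.mp (PH.hyp1 (conj A B) (neg B)) hAnB

theorem prov_disj_inl (A B : Fm) : Prov F fp (imp A (disj A B)) := by
  apply PH.toProv; apply PH.ded; apply PH.ded
  have hbot : PH F fp (neg A :: [A]) bot := PH.mp (PH.hyp0 (neg A)) (PH.hyp1 A (neg A))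
  exact PH.mp (PH.thm (prov_efq B)) hbot

end Aux

/-- The Examiner Paradox in QLP: QLP extended with a fixed point constant `δ`
and the axiom `δ ↔ [(∃x)x:¬δ ∨ (E ∧ ¬(∃x)x:(δ → E))]` for a propositional
letter `E`, with empty primitive term specification, is inconsistent. -/
theorem qlp_examiner_inconsistent (e : ℕ) :
    Prov (fun _ => False)
      (iff' delta (disj (ex 0 (just (.var 0) (neg delta)))
        (conj (atom e) (neg (ex 0 (just (.var 0) (imp delta (atom e))))))))
      bot := by
  set F : Fm → Prop := fun _ => False with hF
  set S1 : Fm := ex 0 (just (.var 0) (neg delta)) with hS1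
  set S2 : Fm := conj (atom e) (neg (ex 0 (just (.var 0) (imp delta (atom e))))) with hS2
  set fpA : Fm := iff' delta (disj S1 S2) with hfpA
  -- the two directions of the fixed point
  have d1 : Prov F fpA (imp delta (disj S1 S2)) :=
    Prov.mp (prov_conj_elim1 _ _) Prov.fp
  have d2 : Prov F fpA (imp (disj S1 S2) delta) :=
    Prov.mp (prov_conj_elim2 _ _) Prov.fp
  -- (∃x) x:¬δ → ¬δ
  have L1 : Prov F fpA (imp S1 (neg delta)) := by
    have h0 : (0 : ℕ) ∉ (neg delta).fv := by simp [Fm.fv, neg]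
    exact Prov.mp (Prov.q4 h0) (Prov.gen 0 (Prov.jt (.var 0) (neg delta)))
  -- δ → E
  have claimE : Prov F fpA (imp delta (atom e)) := by
    apply PH.toProv; apply PH.ded
    have hd : PH F fpA [delta] (disj S1 S2) :=
      PH.mp (PH.thm d1) (PH.hyp0 delta)
    apply hd.caseSplit
    · apply PH.ded
      exact PH.mp (PH.thm (prov_efq (atom e)))
        (PH.mp (PH.mp (PH.thm L1) (PH.hyp0 S1)) (PH.hyp1 delta S1))
    · exact PH.thm (prov_conj_elim1 _ _)
  -- (∃x) x:(δ → E)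
  have tE : Prov F fpA (ex 0 (just (.var 0) (imp delta (atom e)))) := by
    refine Prov.qnec ?_ claimE
    simp [Fm.fv]
  -- ¬δ
  have notdelta : Prov F fpA (neg delta) := by
    apply PH.toProv; apply PH.ded
    have hd : PH F fpA [delta] (disj S1 S2) :=
      PH.mp (PH.thm d1) (PH.hyp0 delta)
    apply hd.caseSplit
    · apply PH.ded
      exact PH.mp (PH.mp (PH.thm L1) (PH.hyp0 S1)) (PH.hyp1 delta S1)
    · apply PH.ded
      exact PH.mp (PH.mp (PH.thm (prov_conj_elim2 (atom e) _)) (PH.hyp0 S2))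
        (PH.thm tE)
  -- (∃x) x:¬δ, hence δ, contradiction
  have s1prov : Prov F fpA S1 := by
    refine Prov.qnec ?_ notdelta
    simp [Fm.fv, neg]
  exact Prov.mp notdelta (Prov.mp d2 (Prov.mp (prov_disj_inl S1 S2) s1prov))
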